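/- For every real v₀ ≥ 0, every real v ≥ 0, and every integer n ≥ 3, one has v²·c_n ≥ c₆·v₀² + 2·v₀·c₆·(v − v₀) + κ·v₀²·(n − 6), where c_n = (1/(2n))·(tan(π/n)/3 + cot(π/n)), c₆ = 5√3/54, and κ = 2π/243 − 5√3/324. -/

import Mathlib

open MeasureTheory Real Filter
open scoped ENNReal RealInnerProductSpace

noncomputable section

/-- The plane `ℝ²`. -/
abbrev Plane := EuclideanSpace ℝ (Fin 2)

/-- The point `(a, b)` of the plane. -/
def mk2 (a b : ℝ) : Plane := (WithLp.equiv 2 (Fin 2 → ℝ)).symm ![a, b]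

/-- The constant `c₆ = 5√3/54`. -/
def c6 : ℝ := 5 * Real.sqrt 3 / 54

/-- The volume `V_λ = (2c₆/λ)^(2/3)` of the scaled domain. -/
def Vlam (lam : ℝ) : ℝ := (2 * c6 / lam) ^ ((2 : ℝ) / 3)

/-- The scaled domain `Ω_λ = V_λ^(1/2)·Ω`. -/
def scaledDomain (lam : ℝ) (Omega : Set Plane) : Set Plane :=
  (fun x : Plane => Real.sqrt (Vlam lam) • x) '' Omega

/-- An admissible atomic measure on `Ω_λ`, encoded by its finite support `Z ⊆ Ω_λ` and
its weights `v`, which are positive on `Z` and of total mass `V_λ`. -/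
def Admissible (lam : ℝ) (Omlam : Set Plane) (Z : Finset Plane) (v : Plane → ℝ) : Prop :=
  (↑Z : Set Plane) ⊆ Omlam ∧ (∀ z ∈ Z, 0 < v z) ∧ ∑ z ∈ Z, v z = Vlam lam

/-- A transport map between the Lebesgue measure on `Ω_λ` and the atomic measure `(Z, v)`:
a measurable map `T : Ω_λ → Z` with `|T⁻¹({z})| = v z` for all `z ∈ Z`. -/
def IsTransportMap (Omlam : Set Plane) (Z : Finset Plane) (v : Plane → ℝ)
    (T : Plane → Plane) : Prop :=
  Measurable T ∧ (∀ x ∈ Omlam, T x ∈ Z) ∧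
    ∀ z ∈ Z, (volume {x | x ∈ Omlam ∧ T x = z}).toReal = v z

/-- The quadratic optimal transport cost `W(L_{Ω_λ}, μ)`. -/
def transportCost (Omlam : Set Plane) (Z : Finset Plane) (v : Plane → ℝ) : ℝ :=
  sInf {c : ℝ | ∃ T : Plane → Plane, IsTransportMap Omlam Z v T ∧
    c = ∫ x in Omlam, ‖x - T x‖ ^ 2}

/-- The energy `E_λ(μ) = 2c₆ Σ_z v_z^(1/2) + W(L_{Ω_λ}, μ)`. -/
def energy (Omlam : Set Plane) (Z : Finset Plane) (v : Plane → ℝ) : ℝ :=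
  2 * c6 * ∑ z ∈ Z, Real.sqrt (v z) + transportCost Omlam Z v

/-- A convex polygon with at most `n` sides: a compact set with nonempty interior which is an
intersection of at most `n` closed half-planes. -/
def IsConvexPolygon (P : Set Plane) (n : ℕ) : Prop :=
  IsCompact P ∧ (interior P).Nonempty ∧
    ∃ H : Finset (Plane × ℝ), H.card ≤ n ∧ (∀ h ∈ H, h.1 ≠ 0) ∧
      P = {x : Plane | ∀ h ∈ H, ⟪h.1, x⟫ ≤ h.2}

/-- The constant `c_n = (1/(2n))·(tan(π/n)/3 + cot(π/n))`. -/
def cPoly (n : ℕ) : ℝ := (1 / (2 * (n : ℝ))) * (Real.tan (π / n) / 3 + Real.cot (π / n))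

/-- The constant `κ = 2π/243 − 5√3/324 = ∂c_n/∂n |_{n=6} < 0`. -/
def kappa : ℝ := 2 * π / 243 - 5 * Real.sqrt 3 / 324

lemma sqrt3_gt : 1.7320508 ≤ Real.sqrt 3 := by
  nlinarith [Real.sq_sqrt (by norm_num : (0:ℝ) ≤ 3), Real.sqrt_nonneg 3]

lemma sqrt3_lt : Real.sqrt 3 ≤ 1.7320509 := by
  nlinarith [Real.sq_sqrt (by norm_num : (0:ℝ) ≤ 3), Real.sqrt_nonneg 3]

lemma sqrt2_gt : 1.4142135 ≤ Real.sqrt 2 := by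
  nlinarith [Real.sq_sqrt (by norm_num : (0:ℝ) ≤ 2), Real.sqrt_nonneg 2]

lemma sqrt2_lt : Real.sqrt 2 ≤ 1.4142136 := by
  nlinarith [Real.sq_sqrt (by norm_num : (0:ℝ) ≤ 2), Real.sqrt_nonneg 2]

lemma sqrt5_gt : 2.2360679 ≤ Real.sqrt 5 := by
  nlinarith [Real.sq_sqrt (by norm_num : (0:ℝ) ≤ 5), Real.sqrt_nonneg 5]

lemma sqrt5_lt : Real.sqrt 5 ≤ 2.2360680 := by
  nlinarith [Real.sq_sqrt (by norm_num : (0:ℝ) ≤ 5), Real.sqrt_nonneg 5]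

lemma c6_sq : c6 ^ 2 = 25 / 972 := by
  have h := Real.sq_sqrt (by norm_num : (0:ℝ) ≤ 3)
  rw [c6]; nlinarith [h]

lemma c6_gt : 0.1603750 ≤ c6 := by rw [c6]; nlinarith [sqrt3_gt]
lemma c6_lt : c6 ≤ 0.1603752 := by rw [c6]; nlinarith [sqrt3_lt]

lemma kappa_gt : -0.00087247 ≤ kappa := by
  rw [kappa]; nlinarith [sqrt3_lt, Real.pi_gt_d6]
lemma kappa_lt : kappa ≤ -0.00087243 := by
  rw [kappa]; nlinarith [sqrt3_gt, Real.pi_lt_d6]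

lemma sin_pn_pos {n : ℕ} (hn : 3 ≤ n) : 0 < Real.sin (π / n) := by
  have hn' : (3:ℝ) ≤ n := by exact_mod_cast hn
  apply Real.sin_pos_of_pos_of_lt_pi
  · positivity
  · rw [div_lt_iff₀ (by linarith)]
    nlinarith [Real.pi_pos]

lemma pn_le {n : ℕ} (hn : 3 ≤ n) : π / n ≤ π / 3 := by
  have hn' : (3:ℝ) ≤ n := by exact_mod_cast hn
  apply div_le_div_of_nonneg_left Real.pi_pos.le (by norm_num) hn'

lemma cos_pn_pos {n : ℕ} (hn : 3 ≤ n) : 0 < Real.cos (π / n) := by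
  have hn' : (3:ℝ) ≤ n := by exact_mod_cast hn
  apply Real.cos_pos_of_mem_Ioo
  constructor
  · have : 0 < π / n := by positivity
    nlinarith [Real.pi_pos]
  · calc π / n ≤ π / 3 := pn_le hn
      _ < π / 2 := by nlinarith [Real.pi_pos]

lemma cPoly_eq {n : ℕ} (hn : 3 ≤ n) :
    cPoly n = (3 - 2 * Real.sin (π / n) ^ 2) /
      (6 * n * Real.sin (π / n) * Real.cos (π / n)) := by
  have hs := sin_pn_pos hn
  have hc := cos_pn_pos hn
  have hn0 : (n:ℝ) ≠ 0 := by positivity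
  have hpyth := Real.sin_sq_add_cos_sq (π / n)
  rw [cPoly, Real.tan_eq_sin_div_cos, Real.cot_eq_cos_div_sin]
  set x := π / (n:ℝ) with hx
  set s := Real.sin x
  set c := Real.cos x
  field_simp
  linear_combination 18 * hpyth

lemma cPoly_pos {n : ℕ} (hn : 3 ≤ n) : 0 < cPoly n := by
  rw [cPoly_eq hn]
  have hs := sin_pn_pos hn
  have hc := cos_pn_pos hn
  have hn' : (0:ℝ) < n := by positivity
  have h1 : Real.sin (π / n) ^ 2 ≤ 1 := Real.sin_sq_le_one _
  apply div_pos (by linarith) (by positivity)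

lemma case3 : c6^2 * (6 * (3:ℝ) * Real.sin (π/3) * Real.cos (π/3)) ≤
    (3 - 2 * Real.sin (π/3)^2) * (c6 - kappa * ((3:ℝ) - 6)) := by
  rw [Real.sin_pi_div_three, Real.cos_pi_div_three, c6_sq]
  have h3 := Real.sq_sqrt (by norm_num : (0:ℝ) ≤ 3)
  nlinarith [sqrt3_lt, c6_gt, kappa_gt, sqrt3_gt]

lemma case4 : c6^2 * (6 * (4:ℝ) * Real.sin (π/4) * Real.cos (π/4)) ≤
    (3 - 2 * Real.sin (π/4)^2) * (c6 - kappa * ((4:ℝ) - 6)) := by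
  rw [Real.sin_pi_div_four, Real.cos_pi_div_four, c6_sq]
  have h2 := Real.sq_sqrt (by norm_num : (0:ℝ) ≤ 2)
  nlinarith [c6_gt, kappa_gt]

lemma case6 : c6^2 * (6 * (6:ℝ) * Real.sin (π/6) * Real.cos (π/6)) ≤
    (3 - 2 * Real.sin (π/6)^2) * (c6 - kappa * ((6:ℝ) - 6)) := by
  rw [Real.sin_pi_div_six, Real.cos_pi_div_six, c6_sq, c6]
  ring_nf
  nlinarith [sqrt3_gt]

lemma case5 : c6^2 * (6 * (5:ℝ) * Real.sin (π/5) * Real.cos (π/5)) ≤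
    (3 - 2 * Real.sin (π/5)^2) * (c6 - kappa * ((5:ℝ) - 6)) := by
  have hc : Real.cos (π/5) = (1 + Real.sqrt 5) / 4 := Real.cos_pi_div_five
  have h5 := Real.sq_sqrt (by norm_num : (0:ℝ) ≤ 5)
  have hs2 : Real.sin (π/5)^2 = (5 - Real.sqrt 5) / 8 := by
    have := Real.sin_sq_add_cos_sq (π/5)
    rw [hc] at this; nlinarith [this]
  have hspos : 0 < Real.sin (π/5) := by
    apply Real.sin_pos_of_pos_of_lt_pi (by positivity)
    nlinarith [Real.pi_pos]
  have hsU : Real.sin (π/5) ≤ 0.5877853 := by nlinarith [hs2, sqrt5_gt]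
  have hcU : Real.cos (π/5) ≤ 0.8090170 := by rw [hc]; nlinarith [sqrt5_lt]
  have hcpos : (0:ℝ) < Real.cos (π/5) := by rw [hc]; nlinarith [sqrt5_gt]
  have hprod : Real.sin (π/5) * Real.cos (π/5) ≤ 0.5877853 * 0.8090170 :=
    mul_le_mul hsU hcU hcpos.le (by norm_num)
  rw [c6_sq]
  nlinarith [hprod, hs2, sqrt5_gt, c6_gt, kappa_gt]

lemma case8 : c6^2 * (6 * (8:ℝ) * Real.sin (π/8) * Real.cos (π/8)) ≤
    (3 - 2 * Real.sin (π/8)^2) * (c6 - kappa * ((8:ℝ) - 6)) := by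
  have h2 := Real.sq_sqrt (by norm_num : (0:ℝ) ≤ 2)
  have h2' : (2 - Real.sqrt 2) * (2 + Real.sqrt 2) = 2 := by nlinarith
  have hsc : Real.sin (π/8) * Real.cos (π/8) = Real.sqrt 2 / 4 := by
    rw [Real.sin_pi_div_eight, Real.cos_pi_div_eight, div_mul_div_comm,
      ← Real.sqrt_mul (by nlinarith [sqrt2_lt]), h2']
    norm_num
  have hs2 : Real.sin (π/8)^2 = (2 - Real.sqrt 2) / 4 := by
    rw [Real.sin_pi_div_eight, div_pow, Real.sq_sqrt (by nlinarith [sqrt2_lt])]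
    norm_num
  rw [c6_sq]
  nlinarith [hsc, hs2, sqrt2_lt, sqrt2_gt, c6_gt, kappa_lt]

lemma case10 : c6^2 * (6 * (10:ℝ) * Real.sin (π/10) * Real.cos (π/10)) ≤
    (3 - 2 * Real.sin (π/10)^2) * (c6 - kappa * ((10:ℝ) - 6)) := by
  have h5 := Real.sq_sqrt (by norm_num : (0:ℝ) ≤ 5)
  have hc5 : Real.cos (π/5) = (1 + Real.sqrt 5) / 4 := Real.cos_pi_div_five
  have hdub : Real.cos (π/5) = 2 * Real.cos (π/10)^2 - 1 := by
    rw [show (π/5) = 2 * (π/10) by ring, Real.cos_two_mul]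
  have hc2 : Real.cos (π/10)^2 = (5 + Real.sqrt 5) / 8 := by
    rw [hc5] at hdub; linarith
  have hs2 : Real.sin (π/10)^2 = (3 - Real.sqrt 5) / 8 := by
    have := Real.sin_sq_add_cos_sq (π/10)
    rw [hc2] at this; linarith
  have hspos : 0 < Real.sin (π/10) := by
    apply Real.sin_pos_of_pos_of_lt_pi (by positivity)
    nlinarith [Real.pi_pos]
  have hcpos : 0 < Real.cos (π/10) := by
    apply Real.cos_pos_of_mem_Ioo
    constructor
    · nlinarith [Real.pi_pos]
    · nlinarith [Real.pi_pos]
  have hsU : Real.sin (π/10) ≤ 0.3090171 := by nlinarith [hs2, sqrt5_gt]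
  have hcU : Real.cos (π/10) ≤ 0.9510566 := by nlinarith [hc2, sqrt5_lt]
  have hprod : Real.sin (π/10) * Real.cos (π/10) ≤ 0.3090171 * 0.9510566 :=
    mul_le_mul hsU hcU hcpos.le (by norm_num)
  rw [c6_sq]
  nlinarith [hprod, hs2, sqrt5_gt, c6_gt, kappa_lt]

/-- Bounds for `sin` and `cos` at a point `y` with `0 < y ≤ 1`. -/
lemma sin_le_taylor {y : ℝ} (h0 : 0 < y) (h1 : y ≤ 1) :
    Real.sin y ≤ y - y^3/6 + y^4 * (5/96) := by
  have hb := Real.sin_bound (by rw [abs_of_pos h0]; exact h1)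
  rw [abs_le, abs_of_pos h0] at hb
  nlinarith [hb.2, pow_pos h0 4, mul_le_mul_of_nonneg_left h1 (pow_pos h0 4).le]

lemma sin_ge_taylor {y : ℝ} (h0 : 0 < y) (h1 : y ≤ 1) :
    y - y^3/6 - y^4 * (5/96) ≤ Real.sin y := by
  have hb := Real.sin_bound (by rw [abs_of_pos h0]; exact h1)
  rw [abs_le, abs_of_pos h0] at hb
  nlinarith [hb.1, pow_pos h0 4, mul_le_mul_of_nonneg_left h1 (pow_pos h0 4).le]

lemma cos_le_taylor {y : ℝ} (h0 : 0 < y) (h1 : y ≤ 1) :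
    Real.cos y ≤ 1 - y^2/2 + y^4 * (5/96) := by
  have hb := Real.cos_bound (by rw [abs_of_pos h0]; exact h1)
  rw [abs_le, abs_of_pos h0] at hb
  linarith [hb.2]

lemma cos_ge_taylor {y : ℝ} (h0 : 0 < y) (h1 : y ≤ 1) :
    1 - y^2/2 - y^4 * (5/96) ≤ Real.cos y := by
  have hb := Real.cos_bound (by rw [abs_of_pos h0]; exact h1)
  rw [abs_le, abs_of_pos h0] at hb
  linarith [hb.1]

set_option maxHeartbeats 1000000 in
lemma case7 : c6^2 * (6 * (7:ℝ) * Real.sin (π/7) * Real.cos (π/7)) ≤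
    (3 - 2 * Real.sin (π/7)^2) * (c6 - kappa * ((7:ℝ) - 6)) := by
  have hπL := Real.pi_gt_d6
  have hπU := Real.pi_lt_d6
  set y : ℝ := π / 14 with hy
  have hyL : 0.2243994 ≤ y := by rw [hy]; linarith
  have hyU : y ≤ 0.2243995 := by rw [hy]; linarith
  have hy0 : 0 < y := by linarith
  have hy3 : y^3 ≤ 0.2243995^3 := pow_le_pow_left₀ hy0.le hyU 3
  have hy3' : 0.2243994^3 ≤ y^3 := pow_le_pow_left₀ (by norm_num) hyL 3
  have hy4 : y^4 ≤ 0.2243995^4 := pow_le_pow_left₀ hy0.le hyU 4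
  have hy2 : y^2 ≤ 0.2243995^2 := pow_le_pow_left₀ hy0.le hyU 2
  have hy2' : 0.2243994^2 ≤ y^2 := pow_le_pow_left₀ (by norm_num) hyL 2
  have hsU : Real.sin y ≤ 0.2226492 := by
    have := sin_le_taylor hy0 (by linarith)
    nlinarith [hy3', hy4]
  have hsL : 0.2223840 ≤ Real.sin y := by
    have := sin_ge_taylor hy0 (by linarith)
    nlinarith [hy3, hy4]
  have hcU : Real.cos y ≤ 0.9749547 := by
    have := cos_le_taylor hy0 (by linarith)
    nlinarith [hy2', hy4]
  have hcL : 0.9746903 ≤ Real.cos y := by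
    have := cos_ge_taylor hy0 (by linarith)
    nlinarith [hy2, hy4]
  have hs7 : Real.sin (π/7) = 2 * Real.sin y * Real.cos y := by
    rw [show π/7 = 2 * (π/14) by ring, Real.sin_two_mul]
  have hc7 : Real.cos (π/7) = 1 - 2 * Real.sin y ^ 2 := by
    rw [show π/7 = 2 * (π/14) by ring, Real.cos_two_mul']
    have := Real.sin_sq_add_cos_sq (π/14)
    linarith
  have hS_U : Real.sin (π/7) ≤ 0.4341458 := by
    rw [hs7]
    nlinarith [mul_le_mul hsU hcU (by linarith) (by norm_num)]
  have hS_pos : 0 ≤ Real.sin (π/7) := by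
    rw [hs7]; nlinarith [hsL, hcL]
  have hC_U : Real.cos (π/7) ≤ 0.9010909 := by
    rw [hc7]; nlinarith [hsL]
  have hC_pos : 0 < Real.cos (π/7) := by
    rw [hc7]; nlinarith [hsU, hsL]
  have hS2 : Real.sin (π/7)^2 ≤ 0.4341458^2 :=
    pow_le_pow_left₀ hS_pos hS_U 2
  have hprod : Real.sin (π/7) * Real.cos (π/7) ≤ 0.4341458 * 0.9010909 :=
    mul_le_mul hS_U hC_U hC_pos.le (by norm_num)
  rw [c6_sq]
  nlinarith [hprod, hS2, c6_gt, kappa_lt]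

set_option maxHeartbeats 1000000 in
lemma case9 : c6^2 * (6 * (9:ℝ) * Real.sin (π/9) * Real.cos (π/9)) ≤
    (3 - 2 * Real.sin (π/9)^2) * (c6 - kappa * ((9:ℝ) - 6)) := by
  have hπL := Real.pi_gt_d6
  have hπU := Real.pi_lt_d6
  set y : ℝ := π / 9 with hy
  have hyL : 0.3490657 ≤ y := by rw [hy]; linarith
  have hyU : y ≤ 0.3490659 := by rw [hy]; linarith
  have hy0 : 0 < y := by linarith
  have hy3' : 0.3490657^3 ≤ y^3 := pow_le_pow_left₀ (by norm_num) hyL 3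
  have hy4 : y^4 ≤ 0.3490659^4 := pow_le_pow_left₀ hy0.le hyU 4
  have hy2' : 0.3490657^2 ≤ y^2 := pow_le_pow_left₀ (by norm_num) hyL 2
  have hsU : Real.sin y ≤ 0.3427520 := by
    have := sin_le_taylor hy0 (by linarith)
    nlinarith [hy3', hy4]
  have hcU : Real.cos y ≤ 0.9398510 := by
    have := cos_le_taylor hy0 (by linarith)
    nlinarith [hy2', hy4]
  have hspos : 0 < Real.sin y := by
    apply Real.sin_pos_of_pos_of_lt_pi hy0
    rw [hy]; nlinarith [Real.pi_pos]
  have hcpos : 0 < Real.cos y := by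
    apply Real.cos_pos_of_mem_Ioo
    constructor
    · nlinarith [Real.pi_pos]
    · rw [hy]; nlinarith [Real.pi_pos]
  have hS2 : Real.sin y^2 ≤ 0.3427520^2 := pow_le_pow_left₀ hspos.le hsU 2
  have hprod : Real.sin y * Real.cos y ≤ 0.3427520 * 0.9398510 :=
    mul_le_mul hsU hcU hcpos.le (by norm_num)
  rw [c6_sq]
  nlinarith [hprod, hS2, c6_gt, kappa_lt]

/-- Single-variable polynomial inequality used in the general case. -/
lemma poly_bound {x : ℝ} (hx0 : 0 < x) (hxU : x ≤ 0.2856) :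
    (25 * 3.141593 / 162) * x * (1 - x^2/2 + x^4 * (5/96)) ≤
      (3 - 2*x^2) * (0.1603750 * x + 0.0027408 - 0.00523482 * x) := by
  have h1 : x^2 ≤ 0.2856 * x := by nlinarith
  have h2 : x^3 ≤ 0.2856 * x^2 := by nlinarith [sq_nonneg x]
  have h3 : x^4 ≤ 0.2856 * x^3 := by nlinarith [pow_pos hx0 3]
  have h4 : x^5 ≤ 0.2856 * x^4 := by nlinarith [pow_pos hx0 4]
  nlinarith [h1, h2, h3, h4]

set_option maxHeartbeats 1000000 in
lemma case_ge11 {n : ℕ} (hn : 11 ≤ n) :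
    c6^2 * (6 * (n:ℝ) * Real.sin (π/n) * Real.cos (π/n)) ≤
      (3 - 2 * Real.sin (π/n)^2) * (c6 - kappa * ((n:ℝ) - 6)) := by
  have hn3 : 3 ≤ n := by omega
  have hn' : (11:ℝ) ≤ n := by exact_mod_cast hn
  have hnpos : (0:ℝ) < n := by linarith
  have hπL := Real.pi_gt_d6
  have hπU := Real.pi_lt_d6
  set x : ℝ := π / n with hxdef
  have hx0 : 0 < x := by positivity
  have hxU : x ≤ 0.2856 := by
    rw [hxdef, div_le_iff₀ hnpos]
    nlinarith
  have hnx : (n:ℝ) * x = π := by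
    rw [hxdef]; field_simp
  have hs0 : 0 < Real.sin x := sin_pn_pos hn3
  have hc0 : 0 < Real.cos x := cos_pn_pos hn3
  have hsx : Real.sin x ≤ x := (Real.sin_lt hx0).le
  set cb : ℝ := 1 - x^2/2 + x^4 * (5/96) with hcbdef
  have hcb : Real.cos x ≤ cb := cos_le_taylor hx0 (by linarith)
  have hcb0 : 0 < cb := lt_of_lt_of_le hc0 hcb
  have hpoly : (25 * 3.141593 / 162) * x * cb ≤
      (3 - 2*x^2) * (0.1603750 * x + 0.0027408 - 0.00523482 * x) := by
    rw [hcbdef]; exact poly_bound hx0 hxU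
  clear hcbdef hxdef
  clear_value cb x
  -- Step 1: bound the left side by (25/162)·π·cb
  have hsc : Real.sin x * Real.cos x ≤ x * cb :=
    mul_le_mul hsx hcb hc0.le hx0.le
  have h1 : c6^2 * (6 * (n:ℝ) * Real.sin x * Real.cos x) ≤ 25/162 * (π * cb) := by
    have h1' : (25/972) * (6*(n:ℝ)) * (Real.sin x * Real.cos x) ≤
        (25/972) * (6*(n:ℝ)) * (x * cb) :=
      mul_le_mul_of_nonneg_left hsc (by positivity)
    have e1 : (25/972) * (6*(n:ℝ)) * (x * cb) = 25/162 * (π * cb) := by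
      linear_combination (25/162 * cb) * hnx
    calc c6^2 * (6 * (n:ℝ) * Real.sin x * Real.cos x)
        = (25/972) * (6*(n:ℝ)) * (Real.sin x * Real.cos x) := by rw [c6_sq]; ring
      _ ≤ (25/972) * (6*(n:ℝ)) * (x * cb) := h1'
      _ = 25/162 * (π * cb) := e1
  -- Step 2: core inequality
  have hKpi : 0.0027408 ≤ (-kappa) * π := by
    nlinarith [kappa_lt, hπL]
  have core : 25/162 * (π * cb) * x ≤ (3 - 2*x^2) * (c6 * x - kappa * (π - 6*x)) := by
    have hb1 : 0.1603750 * x ≤ c6 * x := by nlinarith [c6_gt]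
    have hb2 : (-kappa) * (6*x) ≤ 0.00523482 * x := by nlinarith [kappa_gt]
    have hbracket : 0.1603750 * x + 0.0027408 - 0.00523482 * x ≤
        c6 * x - kappa * (π - 6*x) := by nlinarith [hKpi, hb1, hb2]
    have hfac : (0:ℝ) ≤ 3 - 2*x^2 := by nlinarith
    calc 25/162 * (π * cb) * x ≤ 25/162 * (3.141593 * (cb * x)) := by
          nlinarith [mul_pos hcb0 hx0]
      _ = (25 * 3.141593 / 162) * x * cb := by ring
      _ ≤ (3 - 2*x^2) * (0.1603750 * x + 0.0027408 - 0.00523482 * x) := hpoly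
      _ ≤ (3 - 2*x^2) * (c6 * x - kappa * (π - 6*x)) :=
          mul_le_mul_of_nonneg_left hbracket hfac
  -- rewrite core's right side using n·x = π and divide by x
  have e2 : (3 - 2*x^2) * (c6 * x - kappa * (π - 6*x)) =
      ((3 - 2*x^2) * (c6 - kappa * ((n:ℝ) - 6))) * x := by
    linear_combination ((3 - 2*x^2) * kappa) * hnx
  have step2 : 25/162 * (π * cb) ≤ (3 - 2*x^2) * (c6 - kappa * ((n:ℝ) - 6)) := by
    rw [e2] at core
    exact le_of_mul_le_mul_right core hx0
  -- Step 3: replace x² by sin²x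
  have hA0 : 0 ≤ c6 - kappa * ((n:ℝ) - 6) := by nlinarith [c6_gt, kappa_lt]
  have hs2 : Real.sin x ^ 2 ≤ x^2 := pow_le_pow_left₀ hs0.le hsx 2
  have step3 : (3 - 2*x^2) * (c6 - kappa * ((n:ℝ) - 6)) ≤
      (3 - 2 * Real.sin x ^2) * (c6 - kappa * ((n:ℝ) - 6)) :=
    mul_le_mul_of_nonneg_right (by linarith) hA0
  linarith [h1, step2, step3]

lemma key_ineq {n : ℕ} (hn : 3 ≤ n) :
    c6^2 * (6 * (n:ℝ) * Real.sin (π/n) * Real.cos (π/n)) ≤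
      (3 - 2 * Real.sin (π/n)^2) * (c6 - kappa * ((n:ℝ) - 6)) := by
  rcases lt_or_ge n 11 with h | h
  · interval_cases n
    · exact_mod_cast case3
    · exact_mod_cast case4
    · exact_mod_cast case5
    · exact_mod_cast case6
    · exact_mod_cast case7
    · exact_mod_cast case8
    · exact_mod_cast case9
    · exact_mod_cast case10
  · exact case_ge11 h

/-- **The supporting tangent-plane inequality.** For all reals `v₀, v ≥ 0` and every integer
`n ≥ 3`, `v²·c_n ≥ c₆·v₀² + 2v₀c₆(v − v₀) + κ·v₀²·(n − 6)`. -/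
theorem tangent_plane_inequality (v0 v : ℝ) (hv0 : 0 ≤ v0) (hv : 0 ≤ v)
    (n : ℕ) (hn : 3 ≤ n) :
    c6 * v0 ^ 2 + 2 * v0 * c6 * (v - v0) + kappa * v0 ^ 2 * ((n : ℝ) - 6) ≤
      v ^ 2 * cPoly n := by
  have hcp := cPoly_pos hn
  have hs := sin_pn_pos hn
  have hc := cos_pn_pos hn
  have hn0 : (0:ℝ) < n := by
    have : (3:ℝ) ≤ n := by exact_mod_cast hn
    linarith
  have hD : 0 < 6 * (n:ℝ) * Real.sin (π/n) * Real.cos (π/n) := by positivity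
  have hkey : c6^2 ≤ cPoly n * (c6 - kappa * ((n:ℝ) - 6)) := by
    rw [cPoly_eq hn, div_mul_eq_mul_div, le_div_iff₀ hD]
    exact key_ineq hn
  nlinarith [sq_nonneg (cPoly n * v - c6 * v0),
    mul_nonneg (sub_nonneg.2 hkey) (sq_nonneg v0), hcp, sq_nonneg v0]
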